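/- arXiv:1910.09673 — 5 statements merged into one kernel-verified Lean document; each statement's English description precedes it below -/
import Mathlib

section
/- For any q > 1 and any positive increasing sequence (M_j)_{j≥1} of real numbers, the liminf as j → ∞ of j·(M_j - M_{j-1})/M_j^q equals 0. -/
open Filter

private lemma key_ineq (q : ℝ) (hq : 1 < q) {a b : ℝ} (ha : 0 < a) (hab : a ≤ b) :
    (q - 1) * ((b - a) / b ^ q) ≤ a ^ (1 - q) - b ^ (1 - q) := by
  have hb : 0 < b := ha.trans_le hab
  set h : ℝ → ℝ := fun x => x ^ (1 - q) + (q - 1) * b ^ (-q) * x with hh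
  have hanti : AntitoneOn h (Set.Icc a b) := by
    apply antitoneOn_of_deriv_nonpos (convex_Icc a b)
    · apply ContinuousOn.add
      · intro x hx
        exact (Real.continuousAt_rpow_const x _ (Or.inl (ha.trans_le hx.1).ne')).continuousWithinAt
      · exact (continuous_const.mul continuous_id).continuousOn
    · intro x hx
      rw [interior_Icc] at hx
      have hx0 : 0 < x := ha.trans hx.1
      exact (((Real.hasDerivAt_rpow_const (p := 1 - q) (Or.inl hx0.ne')).add
        (((hasDerivAt_id x).const_mul ((q - 1) * b ^ (-q))))).differentiableAt).differentiableWithinAt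
    · intro x hx
      rw [interior_Icc] at hx
      have hx0 : 0 < x := ha.trans hx.1
      have hd : HasDerivAt h ((1 - q) * x ^ (1 - q - 1) + (q - 1) * b ^ (-q) * 1) x :=
        (Real.hasDerivAt_rpow_const (p := 1 - q) (Or.inl hx0.ne')).add
          ((hasDerivAt_id x).const_mul ((q - 1) * b ^ (-q)))
      rw [hd.deriv]
      have hexp : 1 - q - 1 = -q := by ring
      rw [hexp]
      have hle : b ^ (-q) ≤ x ^ (-q) :=
        Real.rpow_le_rpow_of_nonpos hx0 hx.2.le (by linarith)
      nlinarith [hle]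
  have hab' : h b ≤ h a := hanti (Set.left_mem_Icc.mpr hab) (Set.right_mem_Icc.mpr hab) hab
  simp only [hh] at hab'
  have hbq : b ^ (-q) = (b ^ q)⁻¹ := Real.rpow_neg hb.le q
  have hbqpos : 0 < b ^ q := Real.rpow_pos_of_pos hb q
  rw [hbq] at hab'
  rw [div_eq_mul_inv]
  nlinarith [hab']

theorem liminf_j_mul_growth_rate_eq_zero
    (q : ℝ) (hq : 1 < q) (M : ℕ → ℝ)
    (hpos : ∀ j, 1 ≤ j → 0 < M j)
    (hmono : ∀ j, 2 ≤ j → M (j - 1) ≤ M j) :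
    Filter.liminf (fun j : ℕ => (j : ℝ) * (M j - M (j - 1)) / (M j) ^ q) atTop = 0 := by
  set u : ℕ → ℝ := fun j => (j : ℝ) * (M j - M (j - 1)) / (M j) ^ q with hu
  set a : ℕ → ℝ := fun j => (M j - M (j - 1)) / (M j) ^ q with hadef
  have hMq : ∀ j : ℕ, 2 ≤ j → 0 < (M j) ^ q := fun j hj =>
    Real.rpow_pos_of_pos (hpos j (by omega)) q
  have hann : ∀ j : ℕ, 2 ≤ j → 0 ≤ a j := by
    intro j hj
    exact div_nonneg (by linarith [hmono j hj]) (hMq j hj).le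
  have huj : ∀ j : ℕ, u j = (j : ℝ) * a j := by
    intro j; simp only [hu, hadef, mul_div_assoc]
  have hnn : ∀ j : ℕ, 2 ≤ j → 0 ≤ u j := by
    intro j hj
    rw [huj]
    exact mul_nonneg (by positivity) (hann j hj)
  -- key summability
  have hkey : ∀ j : ℕ, 2 ≤ j →
      (q - 1) * a j ≤ M (j - 1) ^ (1 - q) - M j ^ (1 - q) := by
    intro j hj
    exact key_ineq q hq (hpos (j - 1) (by omega)) (hmono j hj)
  have hsum : Summable (fun i : ℕ => a (i + 2)) := by
    apply summable_of_sum_range_le (c := M 1 ^ (1 - q) / (q - 1))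
      (fun i => hann (i + 2) (by omega))
    intro n
    rw [le_div_iff₀ (by linarith)]
    have h1 : ∀ i ∈ Finset.range n, (q - 1) * a (i + 2) ≤
        M (i + 1) ^ (1 - q) - M (i + 2) ^ (1 - q) := by
      intro i _
      have := hkey (i + 2) (by omega)
      simpa using this
    calc (∑ i ∈ Finset.range n, a (i + 2)) * (q - 1)
        = ∑ i ∈ Finset.range n, (q - 1) * a (i + 2) := by
          rw [Finset.sum_mul]; exact Finset.sum_congr rfl fun i _ => mul_comm _ _
      _ ≤ ∑ i ∈ Finset.range n, (M (i + 1) ^ (1 - q) - M (i + 2) ^ (1 - q)) :=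
          Finset.sum_le_sum h1
      _ = M 1 ^ (1 - q) - M (n + 1) ^ (1 - q) := by
          have := Finset.sum_range_sub' (fun i => M (i + 1) ^ (1 - q)) n
          simpa using this
      _ ≤ M 1 ^ (1 - q) := by
          have : 0 ≤ M (n + 1) ^ (1 - q) :=
            (Real.rpow_pos_of_pos (hpos (n + 1) (by omega)) _).le
          linarith
  -- frequently small
  have hfreq : ∀ ε : ℝ, 0 < ε → ∃ᶠ j in atTop, u j ≤ ε := by
    intro ε hε
    by_contra hc
    rw [not_frequently] at hc
    simp only [not_le] at hc
    obtain ⟨N, hN⟩ := eventually_atTop.mp hc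
    have hsum2 : Summable (fun i : ℕ => a (i + (N + 2))) := by
      have := (summable_nat_add_iff (f := fun i => a (i + 2)) N).mpr hsum
      apply this.congr
      intro i; congr 1 <;> omega
    have hle : ∀ i : ℕ, ε / ((i : ℝ) + (N + 2)) ≤ a (i + (N + 2)) := by
      intro i
      have hj2 : 2 ≤ i + (N + 2) := by omega
      have hgt : ε < u (i + (N + 2)) := hN _ (by omega)
      rw [huj] at hgt
      have hjpos : (0 : ℝ) < ((i + (N + 2) : ℕ) : ℝ) := by positivity
      rw [div_le_iff₀ (by push_cast; positivity)]
      calc ε ≤ ((i + (N + 2) : ℕ) : ℝ) * a (i + (N + 2)) := hgt.le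
        _ = a (i + (N + 2)) * ((i : ℝ) + (N + 2)) := by push_cast; ring
    have hsum3 : Summable (fun i : ℕ => ε / ((i : ℝ) + (N + 2))) :=
      Summable.of_nonneg_of_le (fun i => by positivity) hle hsum2
    have hsum4 : Summable (fun i : ℕ => 1 / ((i : ℝ) + (N + 2))) := by
      have := hsum3.mul_left ε⁻¹
      apply this.congr
      intro i
      field_simp
    have hsum5 : Summable (fun i : ℕ => 1 / ((i : ℝ))) := by
      rw [← summable_nat_add_iff (N + 2)]
      apply hsum4.congr
      intro i; push_cast; ring_nf
    exact Real.not_summable_one_div_natCast hsum5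
  -- conclude
  have hb : IsBoundedUnder (· ≥ ·) atTop u :=
    ⟨0, eventually_map.mpr (eventually_atTop.mpr ⟨2, hnn⟩)⟩
  have hcb : IsCoboundedUnder (· ≥ ·) atTop u :=
    IsCoboundedUnder.of_frequently_le (hfreq 1 one_pos)
  have hge : (0 : ℝ) ≤ liminf u atTop := by
    apply le_liminf_of_le hcb
    exact eventually_atTop.mpr ⟨2, hnn⟩
  have hle : ∀ ε : ℝ, 0 < ε → liminf u atTop ≤ ε := fun ε hε =>
    liminf_le_of_frequently_le (hfreq ε hε) hb
  have : liminf u atTop ≤ 0 := by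
    by_contra hc
    push_neg at hc
    have := hle (liminf u atTop / 2) (by linarith)
    linarith
  linarith
end

section
/- If q > 1, ε > 0, N ≥ 1, and (M_j)_{j≥1} is a positive increasing sequence satisfying j(M_j - M_{j-1}) ≥ ε M_j^q for all j ≥ N, then sup_j M_j = ∞, i.e., the sequence is unbounded. -/
theorem unbounded_of_growth_lower_bound
    (q ε : ℝ) (hq : 1 < q) (hε : 0 < ε) (N : ℕ) (hN : 1 ≤ N)
    (M : ℕ → ℝ)
    (hpos : ∀ j, 1 ≤ j → 0 < M j)
    (hmono : ∀ j, 2 ≤ j → M (j - 1) ≤ M j)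
    (hineq : ∀ j, N ≤ j → ε * (M j) ^ q ≤ (j : ℝ) * (M j - M (j - 1))) :
    ∀ B : ℝ, ∃ j : ℕ, 1 ≤ j ∧ B < M j := by
  by_contra h
  push_neg at h
  obtain ⟨B, hB⟩ := h
  have hMN : 0 < M N := hpos N hN
  set c := ε * M N ^ q with hc
  have hcpos : 0 < c := mul_pos hε (Real.rpow_pos_of_pos hMN q)
  -- M is at least M N beyond N
  have hge : ∀ n, M N ≤ M (N + n) := by
    intro n
    induction n with
    | zero => simp
    | succ n ih =>
      have h2 : 2 ≤ N + n + 1 := by omega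
      have h3 := hmono (N + n + 1) h2
      have hsub : N + n + 1 - 1 = N + n := by omega
      rw [hsub] at h3
      calc M N ≤ M (N + n) := ih
        _ ≤ M (N + n + 1) := h3
  -- key growth estimate
  have key : ∀ n, M N + c * ∑ i ∈ Finset.range n, (1:ℝ)/((N:ℝ) + i + 1) ≤ M (N + n) := by
    intro n
    induction n with
    | zero => simp
    | succ n ih =>
      rw [Finset.sum_range_succ]
      have hj : N ≤ N + n + 1 := by omega
      have hineq' := hineq (N + n + 1) hj
      have hsub : N + n + 1 - 1 = N + n := by omega
      rw [hsub] at hineq'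
      have hjpos : (0:ℝ) < (N:ℝ) + n + 1 := by positivity
      have hMq : M N ^ q ≤ M (N + n + 1) ^ q :=
        Real.rpow_le_rpow hMN.le (hge (n+1)) (by linarith)
      have hcle : c ≤ ((N:ℝ) + n + 1) * (M (N + n + 1) - M (N + n)) := by
        have : ε * M N ^ q ≤ ε * M (N + n + 1) ^ q :=
          mul_le_mul_of_nonneg_left hMq hε.le
        have hcast : ((N + n + 1 : ℕ) : ℝ) = (N:ℝ) + n + 1 := by push_cast; ring
        rw [hcast] at hineq'
        linarith
      have hstep : c / ((N:ℝ) + n + 1) ≤ M (N + n + 1) - M (N + n) := by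
        rw [div_le_iff₀ hjpos]
        linarith [hcle]
      have heq : c * ((1:ℝ)/((N:ℝ) + n + 1)) = c / ((N:ℝ) + n + 1) := by ring
      calc M N + c * (∑ i ∈ Finset.range n, (1:ℝ)/((N:ℝ) + i + 1) + 1/((N:ℝ) + n + 1))
          = (M N + c * ∑ i ∈ Finset.range n, (1:ℝ)/((N:ℝ) + i + 1))
              + c * (1/((N:ℝ) + n + 1)) := by ring
        _ ≤ M (N + n) + c / ((N:ℝ) + n + 1) := by rw [heq]; linarith [ih]
        _ ≤ M (N + n + 1) := by linarith [hstep]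
  -- harmonic-type sum diverges
  set T : ℕ → ℝ := fun n => ∑ i ∈ Finset.range n, (1:ℝ)/(i + 1) with hT
  have hsum_eq : ∀ n, ∑ i ∈ Finset.range n, (1:ℝ)/((N:ℝ) + i + 1) = T (N + n) - T N := by
    intro n
    simp only [hT]
    rw [Finset.sum_range_add, add_sub_cancel_left]
    exact Finset.sum_congr rfl (fun i _ => by push_cast; ring)
  have hTdiv : Filter.Tendsto T Filter.atTop Filter.atTop := by
    simpa [hT] using Real.tendsto_sum_range_one_div_nat_succ_atTop
  have hTmono : ∀ n, T n ≤ T (N + n) := by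
    intro n
    apply Finset.sum_le_sum_of_subset_of_nonneg
    · exact Finset.range_subset_range.2 (by omega)
    · intro i _ _; positivity
  have hTdiv2 : Filter.Tendsto (fun n => T (N + n)) Filter.atTop Filter.atTop :=
    Filter.tendsto_atTop_mono hTmono hTdiv
  obtain ⟨n, hn⟩ := (hTdiv2.eventually_ge_atTop (T N + (B - M N)/c + 1)).exists
  have hkey := key n
  rw [hsum_eq n] at hkey
  have hBn := hB (N + n) (by omega)
  have h1 : T N + (B - M N)/c + 1 ≤ T (N + n) := hn
  have h2 : c * ((B - M N)/c + 1) ≤ c * (T (N + n) - T N) :=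
    mul_le_mul_of_nonneg_left (by linarith) hcpos.le
  have h3 : c * ((B - M N)/c + 1) = (B - M N) + c := by
    rw [mul_add, mul_one, mul_div_cancel₀ _ hcpos.ne']
  linarith
end

section
/- For any s > 0, the function g_s(λ) = Σ_{m=0}^∞ 1/((1+m)(1+λm)^s) is strictly decreasing in λ on (0, ∞). -/
private lemma gs_summable (s : ℝ) (hs : 0 < s) {l : ℝ} (hl : 0 < l) :
    Summable (fun m : ℕ => 1 / ((1 + (m : ℝ)) * (1 + l * m) ^ s)) := by
  set c : ℝ := min l 1 with hc
  have hc0 : 0 < c := lt_min hl one_pos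
  have base : Summable (fun m : ℕ => 1 / ((1 + (m : ℝ)) ^ (1 + s))) := by
    have h := (Real.summable_one_div_nat_rpow (p := 1 + s)).mpr (by linarith)
    have h2 := (summable_nat_add_iff (f := fun n : ℕ => 1 / (n : ℝ) ^ (1 + s)) 1).mpr h
    refine h2.congr fun m => ?_
    push_cast
    ring_nf
  refine ((base.mul_left (c ^ s)⁻¹).of_nonneg_of_le (fun m => ?_) (fun m => ?_))
  · positivity
  · have hm0 : (0:ℝ) ≤ (m:ℝ) := Nat.cast_nonneg m
    have h1m : (0:ℝ) < 1 + (m:ℝ) := by linarith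
    have hkey : c * (1 + (m:ℝ)) ≤ 1 + l * m := by
      have hc1 : c ≤ 1 := min_le_right _ _
      have hcl : c ≤ l := min_le_left _ _
      nlinarith
    have hpos : 0 < c * (1 + (m:ℝ)) := by positivity
    have hr : (c * (1 + (m:ℝ))) ^ s ≤ (1 + l * m) ^ s :=
      Real.rpow_le_rpow hpos.le hkey hs.le
    have hd : (1 + (m:ℝ)) * (c * (1 + (m:ℝ))) ^ s ≤ (1 + (m:ℝ)) * (1 + l * m) ^ s := by
      exact mul_le_mul_of_nonneg_left hr h1m.le
    have hdpos : 0 < (1 + (m:ℝ)) * (c * (1 + (m:ℝ))) ^ s := by positivity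
    calc 1 / ((1 + (m:ℝ)) * (1 + l * m) ^ s)
        ≤ 1 / ((1 + (m:ℝ)) * (c * (1 + (m:ℝ))) ^ s) :=
          one_div_le_one_div_of_le hdpos hd
      _ = (c ^ s)⁻¹ * (1 / (1 + (m:ℝ)) ^ (1 + s)) := by
          rw [Real.mul_rpow hc0.le h1m.le, Real.rpow_add h1m, Real.rpow_one]
          field_simp

theorem gs_strictAntiOn (s : ℝ) (hs : 0 < s) :
    StrictAntiOn (fun lam : ℝ => ∑' m : ℕ, 1 / ((1 + (m : ℝ)) * (1 + lam * m) ^ s))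
      (Set.Ioi (0 : ℝ)) := by
  intro a ha b hb hab
  simp only [Set.mem_Ioi] at ha hb
  refine Summable.tsum_lt_tsum (i := 1) (fun m => ?_) ?_ (gs_summable s hs hb) (gs_summable s hs ha)
  · have hm0 : (0:ℝ) ≤ (m:ℝ) := Nat.cast_nonneg m
    have h1m : (0:ℝ) < 1 + (m:ℝ) := by linarith
    have h1 : (0:ℝ) < 1 + a * m := by nlinarith
    have h2 : 1 + a * m ≤ 1 + b * m := by nlinarith
    have hr : (1 + a * m) ^ s ≤ (1 + b * m) ^ s := Real.rpow_le_rpow h1.le h2 hs.le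
    have hdpos : 0 < (1 + (m:ℝ)) * (1 + a * m) ^ s := by positivity
    exact one_div_le_one_div_of_le hdpos (mul_le_mul_of_nonneg_left hr h1m.le)
  · have h1 : (0:ℝ) < 1 + a * 1 := by nlinarith
    have h2 : 1 + a * 1 < 1 + b * 1 := by nlinarith
    have hr : (1 + a * 1) ^ s < (1 + b * 1) ^ s := Real.rpow_lt_rpow h1.le h2 hs
    have hdpos : 0 < (1 + ((1:ℕ):ℝ)) * (1 + a * ((1:ℕ):ℝ)) ^ s := by
      push_cast; positivity
    have : (1 + ((1:ℕ):ℝ)) * (1 + a * ((1:ℕ):ℝ)) ^ s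
        < (1 + ((1:ℕ):ℝ)) * (1 + b * ((1:ℕ):ℝ)) ^ s := by
      push_cast
      nlinarith [Real.rpow_pos_of_pos h1 s]
    exact one_div_lt_one_div_of_lt hdpos this
end

section
/- For any s > 0, g_s(λ) > 1 for all λ > 0, g_s(λ) → 1 as λ → ∞, and g_s(λ) → ∞ as λ → 0⁺; consequently g_s is a bijection from (0,∞) onto (1,∞). -/
open Filter

theorem gs_bijection (s : ℝ) (hs : 0 < s)
    (g : ℝ → ℝ)
    (hg : ∀ lam : ℝ, g lam = ∑' m : ℕ, 1 / ((1 + (m : ℝ)) * (1 + lam * m) ^ s)) :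
    (∀ lam : ℝ, 0 < lam → 1 < g lam) ∧
    Tendsto g atTop (nhds 1) ∧
    Tendsto g (nhdsWithin 0 (Set.Ioi 0)) atTop ∧
    Set.BijOn g (Set.Ioi (0 : ℝ)) (Set.Ioi (1 : ℝ)) := by
  set f : ℝ → ℕ → ℝ := fun lam m => 1 / ((1 + (m : ℝ)) * (1 + lam * m) ^ s) with hf
  -- basic positivity
  have hbase : ∀ lam : ℝ, 0 ≤ lam → ∀ m : ℕ, (0:ℝ) < 1 + lam * m := by
    intro lam hlam m
    have : (0:ℝ) ≤ lam * m := mul_nonneg hlam (Nat.cast_nonneg m)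
    linarith
  have hden : ∀ lam : ℝ, 0 ≤ lam → ∀ m : ℕ, (0:ℝ) < (1 + (m : ℝ)) * (1 + lam * m) ^ s := by
    intro lam hlam m
    have h1 : (0:ℝ) < 1 + (m:ℝ) := by positivity
    exact mul_pos h1 (Real.rpow_pos_of_pos (hbase lam hlam m) s)
  have hfpos : ∀ lam : ℝ, 0 ≤ lam → ∀ m : ℕ, 0 < f lam m := by
    intro lam hlam m
    exact div_pos one_pos (hden lam hlam m)
  -- summable comparison target
  have hu : Summable (fun m : ℕ => 1 / ((m : ℝ) + 1) ^ (1 + s)) := by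
    have h0 : Summable (fun m : ℕ => 1 / (m : ℝ) ^ (1 + s)) :=
      (Real.summable_one_div_nat_rpow).2 (by linarith)
    have := (summable_nat_add_iff 1).2 h0
    refine this.congr fun n => ?_
    push_cast
    ring_nf
  -- summability of f a for a > 0
  have hsum : ∀ a : ℝ, 0 < a → Summable (f a) := by
    intro a ha
    set t := min a 1 with ht
    have ht0 : 0 < t := lt_min ha one_pos
    refine Summable.of_nonneg_of_le (fun m => (hfpos a ha.le m).le)
      (fun m => ?_) ((hu.mul_left ((t ^ s)⁻¹)))
    have hb : t * (1 + (m:ℝ)) ≤ 1 + a * m := by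
      have h1 : t ≤ 1 := min_le_right a 1
      have h2 : t ≤ a := min_le_left a 1
      have : t * (m:ℝ) ≤ a * m := mul_le_mul_of_nonneg_right h2 (Nat.cast_nonneg m)
      nlinarith
    have hm1 : (0:ℝ) < 1 + (m:ℝ) := by positivity
    have hrb : (t * (1 + (m:ℝ))) ^ s ≤ (1 + a * m) ^ s :=
      Real.rpow_le_rpow (by positivity) hb hs.le
    have hmul : (t * (1 + (m:ℝ))) ^ s = t ^ s * (1 + (m:ℝ)) ^ s :=
      Real.mul_rpow ht0.le hm1.le
    have hsplit : ((m:ℝ) + 1) ^ (1 + s) = (1 + (m:ℝ)) * (1 + (m:ℝ)) ^ s := by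
      rw [add_comm (m:ℝ) 1, Real.rpow_add hm1, Real.rpow_one]
    have hden_ge : t ^ s * (((m:ℝ) + 1) ^ (1 + s)) ≤ (1 + (m:ℝ)) * (1 + a * m) ^ s := by
      rw [hsplit]
      calc t ^ s * ((1 + (m:ℝ)) * (1 + (m:ℝ)) ^ s)
          = (1 + (m:ℝ)) * (t ^ s * (1 + (m:ℝ)) ^ s) := by ring
        _ = (1 + (m:ℝ)) * (t * (1 + (m:ℝ))) ^ s := by rw [hmul]
        _ ≤ (1 + (m:ℝ)) * (1 + a * m) ^ s :=
            mul_le_mul_of_nonneg_left hrb hm1.le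
    have hpos1 : (0:ℝ) < t ^ s * (((m:ℝ) + 1) ^ (1 + s)) := by
      have := Real.rpow_pos_of_pos ht0 s
      have h2 : (0:ℝ) < ((m:ℝ) + 1) ^ (1 + s) := Real.rpow_pos_of_pos (by positivity) (1 + s)
      positivity
    calc f a m = 1 / ((1 + (m:ℝ)) * (1 + a * m) ^ s) := rfl
      _ ≤ 1 / (t ^ s * (((m:ℝ) + 1) ^ (1 + s))) :=
          one_div_le_one_div_of_le hpos1 hden_ge
      _ = (t ^ s)⁻¹ * (1 / ((m:ℝ) + 1) ^ (1 + s)) := by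
          rw [one_div, mul_inv, one_div, mul_comm]
  -- f lam 0 = 1
  have hf0 : ∀ lam : ℝ, f lam 0 = 1 := by
    intro lam
    simp [hf, Real.one_rpow]
  -- monotonicity pointwise
  have hmono : ∀ (a b : ℝ), 0 ≤ a → a ≤ b → ∀ m : ℕ, f b m ≤ f a m := by
    intro a b ha hab m
    have h1 : (1:ℝ) + a * m ≤ 1 + b * m := by
      have : a * (m:ℝ) ≤ b * m := mul_le_mul_of_nonneg_right hab (Nat.cast_nonneg m)
      linarith
    have hr : (1 + a * (m:ℝ)) ^ s ≤ (1 + b * m) ^ s :=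
      Real.rpow_le_rpow (hbase a ha m).le h1 hs.le
    exact one_div_le_one_div_of_le (hden a ha m)
      (mul_le_mul_of_nonneg_left hr (by positivity))
  -- main parts
  have h1 : ∀ lam : ℝ, 0 < lam → 1 < g lam := by
    intro lam hlam
    have hsl := hsum lam hlam
    have hsplit : g lam = f lam 0 + ∑' n : ℕ, f lam (n + 1) := by
      rw [hg]; exact Summable.tsum_eq_zero_add hsl
    rw [hsplit, hf0 lam]
    have htail : 0 < ∑' n : ℕ, f lam (n + 1) :=
      Summable.tsum_pos ((summable_nat_add_iff 1).2 hsl) (fun n => (hfpos lam hlam.le _).le) 0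
        (hfpos lam hlam.le 1)
    linarith
  -- upper bound for large lam
  have hC : Summable (fun n : ℕ => 1 / (((n:ℝ) + 2) * ((n:ℝ) + 1) ^ s)) := by
    refine Summable.of_nonneg_of_le (fun n => by positivity) (fun n => ?_) hu
    have h1 : (0:ℝ) < ((n:ℝ) + 1) ^ (1 + s) := Real.rpow_pos_of_pos (by positivity) _
    have hsplit : ((n:ℝ) + 1) ^ (1 + s) = ((n:ℝ) + 1) * ((n:ℝ) + 1) ^ s := by
      rw [add_comm (1:ℝ) s, Real.rpow_add (by positivity), Real.rpow_one]; ring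
    refine one_div_le_one_div_of_le h1 ?_
    rw [hsplit]
    have : (0:ℝ) < ((n:ℝ) + 1) ^ s := Real.rpow_pos_of_pos (by positivity) s
    nlinarith
  set C : ℝ := ∑' n : ℕ, 1 / (((n:ℝ) + 2) * ((n:ℝ) + 1) ^ s) with hCdef
  have hup : ∀ lam : ℝ, 0 < lam → g lam ≤ 1 + lam ^ (-s) * C := by
    intro lam hlam
    have hsl := hsum lam hlam
    have hsplit : g lam = f lam 0 + ∑' n : ℕ, f lam (n + 1) := by
      rw [hg]; exact Summable.tsum_eq_zero_add hsl
    have hterm : ∀ n : ℕ, f lam (n + 1) ≤ lam ^ (-s) * (1 / (((n:ℝ) + 2) * ((n:ℝ) + 1) ^ s)) := by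
      intro n
      have hn1 : (0:ℝ) < (n:ℝ) + 1 := by positivity
      have hb : lam * ((n:ℝ) + 1) ≤ 1 + lam * ((n:ℕ) + 1 : ℕ) := by
        push_cast; linarith
      have hr : (lam * ((n:ℝ) + 1)) ^ s ≤ (1 + lam * ((n:ℕ) + 1 : ℕ)) ^ s :=
        Real.rpow_le_rpow (by positivity) hb hs.le
      have hmul : (lam * ((n:ℝ) + 1)) ^ s = lam ^ s * ((n:ℝ) + 1) ^ s :=
        Real.mul_rpow hlam.le hn1.le
      have hcast : (1 : ℝ) + ((n:ℕ) + 1 : ℕ) = (n:ℝ) + 2 := by push_cast; ring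
      have hge : lam ^ s * (((n:ℝ) + 2) * ((n:ℝ) + 1) ^ s)
          ≤ (1 + ((n:ℕ) + 1 : ℕ) : ℝ) * (1 + lam * ((n:ℕ) + 1 : ℕ)) ^ s := by
        rw [hcast]
        calc lam ^ s * (((n:ℝ) + 2) * ((n:ℝ) + 1) ^ s)
            = ((n:ℝ) + 2) * (lam ^ s * ((n:ℝ) + 1) ^ s) := by ring
          _ = ((n:ℝ) + 2) * (lam * ((n:ℝ) + 1)) ^ s := by rw [hmul]
          _ ≤ ((n:ℝ) + 2) * (1 + lam * ((n:ℕ) + 1 : ℕ)) ^ s := by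
              refine mul_le_mul_of_nonneg_left ?_ (by positivity)
              exact hr
      have hpos1 : (0:ℝ) < lam ^ s * (((n:ℝ) + 2) * ((n:ℝ) + 1) ^ s) := by
        have := Real.rpow_pos_of_pos hlam s
        have h2 : (0:ℝ) < ((n:ℝ) + 1) ^ s := Real.rpow_pos_of_pos hn1 s
        positivity
      calc f lam (n + 1) = 1 / ((1 + ((n:ℕ) + 1 : ℕ) : ℝ) * (1 + lam * ((n:ℕ) + 1 : ℕ)) ^ s) := rfl
        _ ≤ 1 / (lam ^ s * (((n:ℝ) + 2) * ((n:ℝ) + 1) ^ s)) :=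
            one_div_le_one_div_of_le hpos1 hge
        _ = lam ^ (-s) * (1 / (((n:ℝ) + 2) * ((n:ℝ) + 1) ^ s)) := by
            rw [Real.rpow_neg hlam.le, one_div, mul_inv, one_div]
    have htail : (∑' n : ℕ, f lam (n + 1)) ≤ lam ^ (-s) * C := by
      have := Summable.tsum_le_tsum hterm ((summable_nat_add_iff 1).2 hsl) (hC.mul_left _)
      rwa [tsum_mul_left] at this
    rw [hsplit, hf0 lam]
    linarith
  have h2 : Tendsto g atTop (nhds 1) := by
    have hupper : Tendsto (fun lam : ℝ => 1 + lam ^ (-s) * C) atTop (nhds (1 + 0 * C)) :=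
      tendsto_const_nhds.add ((tendsto_rpow_neg_atTop hs).mul_const C)
    rw [show (1 : ℝ) + 0 * C = 1 by ring] at hupper
    refine tendsto_of_tendsto_of_tendsto_of_le_of_le' tendsto_const_nhds hupper ?_ ?_
    · filter_upwards [eventually_gt_atTop (0:ℝ)] with lam hlam
      exact (h1 lam hlam).le
    · filter_upwards [eventually_gt_atTop (0:ℝ)] with lam hlam
      exact hup lam hlam
  -- continuity of each term on Ici 0
  have hcont : ∀ m : ℕ, ContinuousOn (fun lam => f lam m) (Set.Ici (0:ℝ)) := by
    intro m
    apply ContinuousOn.div continuousOn_const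
    · apply ContinuousOn.mul continuousOn_const
      have hb : Continuous fun lam : ℝ => 1 + lam * m := by continuity
      intro x hx
      refine ((Real.continuousAt_rpow_const _ s (Or.inr hs.le)).comp
        hb.continuousAt).continuousWithinAt
    · intro x hx
      exact (hden x hx m).ne'
  -- continuity of g on Ioi 0
  have hgc : ContinuousOn g (Set.Ioi (0:ℝ)) := by
    intro x hx
    have hx2 : (0:ℝ) < x / 2 := by simpa using half_pos (Set.mem_Ioi.mp hx)
    have hco : ContinuousOn (fun lam => ∑' m : ℕ, f lam m) (Set.Ici (x/2)) := by
      refine continuousOn_tsum (fun m => (hcont m).mono ?_) (hsum (x/2) hx2) ?_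
      · exact fun y hy => le_trans hx2.le hy
      · intro n y hy
        rw [Real.norm_eq_abs, abs_of_pos (hfpos y (le_trans hx2.le hy) n)]
        exact hmono (x/2) y hx2.le hy n
    have hco' : ContinuousOn g (Set.Ici (x/2)) := by
      refine hco.congr fun y hy => (hg y)
    have : ContinuousAt g x := by
      refine hco'.continuousAt (Ici_mem_nhds ?_)
      linarith
    exact this.continuousWithinAt
  -- blow up at 0
  have h3 : Tendsto g (nhdsWithin 0 (Set.Ioi 0)) atTop := by
    rw [tendsto_atTop]
    intro b
    obtain ⟨N, hN⟩ := (tendsto_atTop.1 Real.tendsto_sum_range_one_div_nat_succ_atTop (b + 1)).exists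
    have hS : Tendsto (fun lam => ∑ m ∈ Finset.range N, f lam m) (nhdsWithin 0 (Set.Ioi 0))
        (nhds (∑ m ∈ Finset.range N, f 0 m)) := by
      have hc : ContinuousWithinAt (fun lam => ∑ m ∈ Finset.range N, f lam m)
          (Set.Ici (0:ℝ)) 0 := by
        refine (continuousOn_finset_sum _ fun m _ => hcont m) 0 Set.self_mem_Ici
      exact hc.mono_left (nhdsWithin_mono _ Set.Ioi_subset_Ici_self)
    have hS0 : (∑ m ∈ Finset.range N, f 0 m) = ∑ i ∈ Finset.range N, 1 / ((i:ℝ) + 1) := by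
      refine Finset.sum_congr rfl fun m _ => ?_
      simp [hf, Real.one_rpow, add_comm]
    rw [hS0] at hS
    have hev : ∀ᶠ lam in nhdsWithin 0 (Set.Ioi 0),
        b < ∑ m ∈ Finset.range N, f lam m :=
      hS.eventually (eventually_gt_nhds (by linarith))
    filter_upwards [hev, self_mem_nhdsWithin] with lam hblt (hlam : 0 < lam)
    have hle : (∑ m ∈ Finset.range N, f lam m) ≤ g lam := by
      rw [hg]
      exact Summable.sum_le_tsum _ (fun m _ => (hfpos lam hlam.le m).le) (hsum lam hlam)
    linarith
  -- strict antitone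
  have hanti : StrictAntiOn g (Set.Ioi (0:ℝ)) := by
    intro a ha b hb hab
    rw [hg, hg]
    refine Summable.tsum_lt_tsum_of_nonneg (i := 1) (fun m => (hfpos b (le_of_lt hb) m).le)
      (fun m => hmono a b (le_of_lt ha) hab.le m) ?_ (hsum a ha)
    show f b 1 < f a 1
    have h1 : (1:ℝ) + a * (1:ℕ) < 1 + b * (1:ℕ) := by push_cast; linarith
    have hr : (1 + a * (1:ℕ) : ℝ) ^ s < (1 + b * (1:ℕ)) ^ s :=
      Real.rpow_lt_rpow (hbase a (le_of_lt ha) 1).le h1 hs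
    apply one_div_lt_one_div_of_lt (hden a (le_of_lt ha) 1)
    have : (0:ℝ) < 1 + (1:ℕ) := by norm_num
    exact mul_lt_mul_of_pos_left hr (by push_cast; norm_num)
  refine ⟨h1, h2, h3, ?_, hanti.injOn, ?_⟩
  · intro x hx
    exact h1 x hx
  · intro y hy
    have hy1 : (1:ℝ) < y := hy
    -- find b with g b < y
    have hevb : ∀ᶠ lam in atTop, g lam < y := h2.eventually (eventually_lt_nhds hy1)
    obtain ⟨b, hb0, hby⟩ := ((eventually_gt_atTop (0:ℝ)).and hevb).exists
    -- find a with g a > y, 0 < a < b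
    have heva : ∀ᶠ lam in nhdsWithin 0 (Set.Ioi 0), y < g lam :=
      h3.eventually (eventually_gt_atTop y)
    have hevlt : ∀ᶠ lam in nhdsWithin 0 (Set.Ioi 0), lam < b :=
      eventually_nhdsWithin_of_eventually_nhds (eventually_lt_nhds hb0)
    obtain ⟨a, ⟨hya, hab⟩, ha0⟩ := ((heva.and hevlt).and self_mem_nhdsWithin).exists
    have ha0' : (0:ℝ) < a := ha0
    have hsub : Set.Icc a b ⊆ Set.Ioi (0:ℝ) := fun z hz => lt_of_lt_of_le ha0' hz.1
    have hIVT := intermediate_value_Icc' hab.le (hgc.mono hsub)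
    have hymem : y ∈ Set.Icc (g b) (g a) := ⟨hby.le, hya.le⟩
    obtain ⟨c, hc, hgc'⟩ := hIVT hymem
    exact ⟨c, hsub hc, hgc'⟩
end

section
/- Let q̃ ∈ (1,2], N₁ ≥ 1 an integer, and (x_j)_{j ≥ N₁ - 1} a sequence of positive reals satisfying x_{j-1} ≤ x_j (1 - x_j/j)^{q̃-1} with 0 < x_j < j for all j ≥ N₁. Then 1/x_{j-1} ≥ 1/x_j + (q̃-1)/j for all j ≥ N₁; consequently for every k > N₁, 1/x_{N₁-1} ≥ 1/x_k + (q̃-1) Σ_{j=N₁}^{k} 1/j, and no such sequence can exist (since the harmonic sum diverges while the left side is fixed). -/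
theorem recursive_reciprocal_ineq_and_contradiction
    (qt : ℝ) (hq1 : 1 < qt) (hq2 : qt ≤ 2) (N₁ : ℕ) (hN₁ : 1 ≤ N₁)
    (x : ℕ → ℝ)
    (hxpos : ∀ j, N₁ - 1 ≤ j → 0 < x j)
    (hxlt : ∀ j, N₁ ≤ j → x j < (j : ℝ))
    (hrec : ∀ j, N₁ ≤ j → x (j - 1) ≤ x j * (1 - x j / (j : ℝ)) ^ (qt - 1)) :
    (∀ j, N₁ ≤ j → 1 / x j + (qt - 1) / (j : ℝ) ≤ 1 / x (j - 1)) ∧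
    (∀ k, N₁ < k →
      1 / x k + (qt - 1) * ∑ j ∈ Finset.Icc N₁ k, 1 / (j : ℝ) ≤ 1 / x (N₁ - 1)) ∧
    False := by
  have part1 : ∀ j, N₁ ≤ j → 1 / x j + (qt - 1) / (j : ℝ) ≤ 1 / x (j - 1) := by
    intro j hj
    have hj1 : 1 ≤ j := le_trans hN₁ hj
    have hjR : (0 : ℝ) < (j : ℝ) := by exact_mod_cast hj1
    have hxj : 0 < x j := hxpos j (le_trans (Nat.sub_le _ _) hj)
    have hxj1 : 0 < x (j - 1) := hxpos (j - 1) (Nat.sub_le_sub_right hj 1)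
    have hlt : x j < (j : ℝ) := hxlt j hj
    set t : ℝ := x j / j with ht
    have ht0 : 0 < t := div_pos hxj hjR
    have ht1 : t < 1 := (div_lt_one hjR).mpr hlt
    set P : ℝ := (1 - t) ^ (qt - 1) with hP
    have hPpos : 0 < P := Real.rpow_pos_of_pos (by linarith) _
    have hB : P ≤ 1 - (qt - 1) * t := by
      have := rpow_one_add_le_one_add_mul_self (s := -t) (by linarith) (p := qt - 1)
        (by linarith) (by linarith)
      have h' : (1 + -t) ^ (qt - 1) ≤ 1 + (qt - 1) * (-t) := this
      rw [hP]
      have : (1 : ℝ) - t = 1 + -t := by ring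
      rw [this]
      linarith [h']
    have key : (1 + (qt - 1) * t) * P ≤ 1 := by
      have h1 : (0 : ℝ) ≤ 1 + (qt - 1) * t := by nlinarith
      have h2 : (1 + (qt - 1) * t) * P ≤ (1 + (qt - 1) * t) * (1 - (qt - 1) * t) :=
        mul_le_mul_of_nonneg_left hB h1
      nlinarith [sq_nonneg ((qt - 1) * t)]
    have h1 : 1 / (x j * P) ≤ 1 / x (j - 1) :=
      one_div_le_one_div_of_le hxj1 (hrec j hj)
    have h2 : 1 / x j + (qt - 1) / (j : ℝ) ≤ 1 / (x j * P) := by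
      rw [le_div_iff₀ (mul_pos hxj hPpos)]
      have expand : (1 / x j + (qt - 1) / (j : ℝ)) * (x j * P) = (1 + (qt - 1) * t) * P := by
        rw [ht]; field_simp
      rw [expand]; exact key
    linarith
  have part2 : ∀ k, N₁ ≤ k →
      1 / x k + (qt - 1) * ∑ j ∈ Finset.Icc N₁ k, 1 / (j : ℝ) ≤ 1 / x (N₁ - 1) := by
    intro k hk
    induction k, hk using Nat.le_induction with
    | base =>
      rw [Finset.Icc_self, Finset.sum_singleton]
      have := part1 N₁ le_rfl
      rw [mul_one_div]
      linarith
    | succ k hk ih =>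
      have hsum : ∑ j ∈ Finset.Icc N₁ (k + 1), 1 / (j : ℝ)
          = (∑ j ∈ Finset.Icc N₁ k, 1 / (j : ℝ)) + 1 / ((k + 1 : ℕ) : ℝ) :=
        Finset.sum_Icc_succ_top (by omega) _
      have hstep := part1 (k + 1) (by omega)
      simp only [Nat.add_sub_cancel] at hstep
      rw [hsum, mul_add, mul_one_div]
      linarith
  refine ⟨part1, fun k hk => part2 k hk.le, ?_⟩
  -- divergence of harmonic series
  have hdiv : Filter.Tendsto (fun n => ∑ i ∈ Finset.range n, 1 / (i : ℝ))
      Filter.atTop Filter.atTop := by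
    rw [← not_summable_iff_tendsto_nat_atTop_of_nonneg (fun n => by positivity)]
    exact Real.not_summable_one_div_natCast
  set C : ℝ := (∑ i ∈ Finset.range N₁, 1 / (i : ℝ)) + 1 / x (N₁ - 1) / (qt - 1) + 1 with hC
  obtain ⟨M, hM⟩ := (hdiv.eventually_ge_atTop C).exists_forall_of_atTop
  set k : ℕ := max M (N₁ + 1) with hk
  have hkN : N₁ ≤ k := by omega
  have hIcc : ∑ j ∈ Finset.Icc N₁ k, 1 / (j : ℝ)
      = (∑ i ∈ Finset.range (k + 1), 1 / (i : ℝ)) - ∑ i ∈ Finset.range N₁, 1 / (i : ℝ) := by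
    rw [← Finset.Ico_add_one_right_eq_Icc, Finset.sum_Ico_eq_sub _ (by omega : N₁ ≤ k + 1)]
  have hS := hM (k + 1) (by omega)
  have h2 := part2 k hkN
  have hxpos' : 0 < x k := hxpos k (by omega)
  have hx1pos : 0 < 1 / x (N₁ - 1) := one_div_pos.mpr (hxpos _ le_rfl)
  rw [hIcc] at h2
  have hqt : 0 < qt - 1 := by linarith
  have : (qt - 1) * ((∑ i ∈ Finset.range (k + 1), 1 / (i : ℝ))
      - ∑ i ∈ Finset.range N₁, 1 / (i : ℝ)) ≥ 1 / x (N₁ - 1) + (qt - 1) := by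
    have : (∑ i ∈ Finset.range (k + 1), 1 / (i : ℝ)) - ∑ i ∈ Finset.range N₁, 1 / (i : ℝ)
        ≥ 1 / x (N₁ - 1) / (qt - 1) + 1 := by rw [hC] at hS; linarith
    calc (qt - 1) * ((∑ i ∈ Finset.range (k + 1), 1 / (i : ℝ))
        - ∑ i ∈ Finset.range N₁, 1 / (i : ℝ))
        ≥ (qt - 1) * (1 / x (N₁ - 1) / (qt - 1) + 1) := by
          exact mul_le_mul_of_nonneg_left this hqt.le
      _ = 1 / x (N₁ - 1) + (qt - 1) := by
          have hxne : x (N₁ - 1) ≠ 0 := (hxpos _ le_rfl).ne'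
          field_simp
  have h3 : 0 < 1 / x k := by positivity
  linarith
end
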